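/- Consider the Ceva combinatorics: six lines l_1,...,l_6 whose points of multiplicity greater than two are exactly {l_1,l_2,l_3}, {l_1,l_5,l_6}, {l_2,l_4,l_6}, {l_3,l_4,l_5}, all other intersections being double points. Fix a basis {v_1,v_2} of Z^2. Then the map α : H → Z^2 given by α(e_1)=α(e_4)=v_1, α(e_2)=α(e_5)=v_2, α(e_3)=α(e_6)=-v_1-v_2 is a 3-admissible map. -/

import Mathlib

open scoped BigOperators

/-- `H = ℤⁿ / ℤ·(1,…,1)`. -/
abbrev Hmod (n : ℕ) : Type := (Fin n → ℤ) ⧸ Submodule.span ℤ {(fun _ => (1 : ℤ) : Fin n → ℤ)}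

/-- The class `e_i` of the `i`-th standard basis vector in `H`. -/
def egen (n : ℕ) (i : Fin n) : Hmod n := Submodule.Quotient.mk (Pi.single i 1)

/-- A line combinatorics on `n` lines. -/
structure LineCombinatorics (n : ℕ) where
  P : Finset (Finset (Fin n))
  two_le : ∀ p ∈ P, 2 ≤ p.card
  existsUnique : ∀ i j : Fin n, i ≠ j → ∃! p, p ∈ P ∧ i ∈ p ∧ j ∈ p

/-- The four triple points of the Ceva combinatorics (lines `l_1,…,l_6`
corresponding to `0,…,5`): `{l₁,l₂,l₃}`, `{l₁,l₅,l₆}`, `{l₂,l₄,l₆}`,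
`{l₃,l₄,l₅}`. -/
def cevaTriples : Finset (Finset (Fin 6)) :=
  {({0, 1, 2} : Finset (Fin 6)), {0, 4, 5}, {1, 3, 5}, {2, 3, 4}}

lemma not_li_smul (u : Fin 2 → ℤ) (c : ℤ) :
    ¬ LinearIndependent ℤ ![u, c • u] := by
  intro h
  rw [Fintype.linearIndependent_iff] at h
  have := h ![c, -1] (by
    funext x
    simp [Fin.sum_univ_two]) 1
  simp at this

/-- index class map: 0,3 ↦ 0; 1,4 ↦ 1; 2,5 ↦ 2 -/
def cevaClass : Fin 6 → Fin 3 := ![0, 1, 2, 0, 1, 2]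

lemma pair_class (i j : Fin 6) (hij : i ≠ j)
    (h : ∀ t ∈ cevaTriples, ¬ (i ∈ t ∧ j ∈ t)) :
    cevaClass i = cevaClass j := by
  revert hij h; revert i j; decide

/-- For the Ceva combinatorics (six lines whose points of
multiplicity greater than two are exactly the four triples above, all other
points being double) and a basis `{v₁, v₂}` of `ℤ²`, the map
`α(e₁)=α(e₄)=v₁`, `α(e₂)=α(e₅)=v₂`, `α(e₃)=α(e₆)=-v₁-v₂` is a 3-admissible
map. -/
theorem ceva_admissible (C : LineCombinatorics 6)
    (htriples : ∀ p ∈ cevaTriples, p ∈ C.P)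
    (hmult : ∀ p ∈ C.P, 3 ≤ p.card ↔ p ∈ cevaTriples)
    (v : Module.Basis (Fin 2) ℤ (Fin 2 → ℤ)) :
    ∃ α : Hmod 6 →ₗ[ℤ] (Fin 2 → ℤ),
      α (egen 6 0) = v 0 ∧ α (egen 6 3) = v 0 ∧
      α (egen 6 1) = v 1 ∧ α (egen 6 4) = v 1 ∧
      α (egen 6 2) = -v 0 - v 1 ∧ α (egen 6 5) = -v 0 - v 1 ∧
      Function.Surjective α ∧
      ∀ p ∈ C.P, ∀ i ∈ p,
        ¬ LinearIndependent ℤ ![α (egen 6 i), ∑ j ∈ p, α (egen 6 j)] := by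
  set W : Fin 3 → (Fin 2 → ℤ) := ![v 0, v 1, -v 0 - v 1] with hW
  set w : Fin 6 → (Fin 2 → ℤ) := fun k => W (cevaClass k) with hw
  set β : (Fin 6 → ℤ) →ₗ[ℤ] (Fin 2 → ℤ) := Fintype.linearCombination ℤ w with hβ
  have hker : Submodule.span ℤ {(fun _ => (1 : ℤ) : Fin 6 → ℤ)} ≤ LinearMap.ker β := by
    rw [Submodule.span_le, Set.singleton_subset_iff]
    simp only [SetLike.mem_coe, LinearMap.mem_ker, hβ,
      Fintype.linearCombination_apply, one_smul]
    show ∑ i : Fin 6, w i = 0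
    have c0 : cevaClass 0 = 0 := rfl
    have c1 : cevaClass 1 = 1 := rfl
    have c2 : cevaClass 2 = 2 := rfl
    have c3 : cevaClass 3 = 0 := rfl
    have c4 : cevaClass 4 = 1 := rfl
    have c5 : cevaClass 5 = 2 := rfl
    simp only [hw, Fin.sum_univ_six, c0, c1, c2, c3, c4, c5, hW]
    simp
  refine ⟨Submodule.liftQ _ β hker, ?_⟩
  set α := Submodule.liftQ _ β hker with hα
  have heval : ∀ i : Fin 6, α (egen 6 i) = w i := by
    intro i
    show β (Pi.single i 1) = w i
    rw [hβ, Fintype.linearCombination_apply_single, one_smul]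
  have h0 : α (egen 6 0) = v 0 := heval 0
  have h1 : α (egen 6 1) = v 1 := heval 1
  refine ⟨h0, heval 3, h1, heval 4, heval 2, heval 5, ?_, ?_⟩
  · rw [← LinearMap.range_eq_top, ← top_le_iff, ← v.span_eq, Submodule.span_le]
    rintro x ⟨i, rfl⟩
    fin_cases i
    · exact ⟨egen 6 0, h0⟩
    · exact ⟨egen 6 1, h1⟩
  · intro p hp i hi
    by_cases ht : p ∈ cevaTriples
    · -- triple point: the sum over p is 0
      have hsum : ∑ j ∈ p, α (egen 6 j) = 0 := by
        simp only [heval]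
        have c0 : w 0 = v 0 := rfl
        have c1 : w 1 = v 1 := rfl
        have c2 : w 2 = -v 0 - v 1 := by show W 2 = _; simp [hW]
        have c3 : w 3 = v 0 := rfl
        have c4 : w 4 = v 1 := rfl
        have c5 : w 5 = -v 0 - v 1 := by show W 2 = _; simp [hW]
        fin_cases ht <;>
          · show ∑ j ∈ (_ : Finset (Fin 6)), w j = 0
            rw [Finset.sum_insert (by decide), Finset.sum_insert (by decide),
              Finset.sum_singleton]
            simp only [c0, c1, c2, c3, c4, c5]
            abel
      rw [hsum, show (0 : Fin 2 → ℤ) = (0:ℤ) • α (egen 6 i) by simp]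
      exact not_li_smul _ 0
    · -- double point
      have hcard : p.card = 2 := by
        have h2 := C.two_le p hp
        have h3 : ¬ 3 ≤ p.card := fun h => ht ((hmult p hp).mp h)
        omega
      obtain ⟨a, b, hab, rfl⟩ := Finset.card_eq_two.mp hcard
      have hnot : ∀ t ∈ cevaTriples, ¬ (a ∈ t ∧ b ∈ t) := by
        rintro t htt ⟨hat, hbt⟩
        obtain ⟨q, _, hq⟩ := C.existsUnique a b hab
        have e1 : ({a, b} : Finset (Fin 6)) = q :=
          hq _ ⟨hp, by simp, by simp⟩
        have e2 : t = q := hq _ ⟨htriples t htt, hat, hbt⟩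
        have : t = ({a, b} : Finset (Fin 6)) := by rw [e2, ← e1]
        have hct : t.card = 3 := by
          fin_cases htt <;> decide
        rw [this, hcard] at hct
        exact absurd hct (by norm_num)
      have hcls := pair_class a b hab hnot
      have hwab : w a = w b := by rw [hw]; simp [hcls]
      have hsum : ∑ j ∈ ({a, b} : Finset (Fin 6)), α (egen 6 j) =
          (2 : ℤ) • α (egen 6 i) := by
        rw [Finset.sum_pair hab, heval, heval, heval, hwab]
        rcases Finset.mem_insert.mp hi with rfl | hib
        · rw [hwab]; module
        · rw [Finset.mem_singleton.mp hib]; module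
      rw [hsum]
      exact not_li_smul _ 2
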